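/- Let P, P′ ∈ 𝔓 and f₁, f₂, g₁, g₂ ∈ U° with f_i, g_i ∉ P ∪ P′ for i = 1, 2. Suppose: (1) P′ separates f₁ and f₂ while P does not; (2) P′ separates g₁ and g₂ while P does not; (3) P separates each of f₁, f₂ from each of g₁, g₂. Then P ⩀ P′ ≠ ∅. -/

import Mathlib

noncomputable section

namespace PaperBound

variable {B : Type} {W : Type} [Group W]

/-- The value `B(α_i, α_j)` of the canonical symmetric bilinear form on simple roots:
`-cos (π / m i j)` if `m i j ≠ ∞` (encoded as `M i j ≠ 0`) and `-1` otherwise. -/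
def cB (M : CoxeterMatrix B) (i j : B) : ℝ :=
  if M i j = 0 then -1 else - Real.cos (Real.pi / (M i j : ℝ))

/-- The canonical symmetric bilinear form on `V = B → ℝ` (coordinates in the basis of
simple roots `Δ = {α_i}`). -/
def bform [Fintype B] (M : CoxeterMatrix B) (u v : B → ℝ) : ℝ :=
  ∑ i, ∑ j, u i * v j * cB M i j

/-- The natural pairing `⟨-,-⟩ : V* × V → ℝ`, where both `V` and `V*` are modelled as
`B → ℝ` (coordinates of `V*` taken in the dual basis of `Δ`). -/
def pair [Fintype B] (f v : B → ℝ) : ℝ := ∑ i, f i * v i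

/-- The simple root `α_i ∈ V`. -/
def sroot [DecidableEq B] (i : B) : B → ℝ := Pi.single i 1

/-- `ρ` is the geometric representation of `W` on `V = B → ℝ`:
`s_i · v = v - 2 B(α_i, v) α_i`. -/
def IsGeomRep [Fintype B] [DecidableEq B] (M : CoxeterMatrix B) (cs : CoxeterSystem M W)
    (ρ : W →* (B → ℝ) ≃ₗ[ℝ] (B → ℝ)) : Prop :=
  ∀ (i : B) (v : B → ℝ), ρ (cs.simple i) v = v - (2 * bform M (sroot i) v) • sroot i

/-- `π` is the contragredient representation of `W` on `V* = B → ℝ`: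
`⟨w·f, w·v⟩ = ⟨f, v⟩`. -/
def IsContraRep [Fintype B] (ρ : W →* (B → ℝ) ≃ₗ[ℝ] (B → ℝ))
    (π : W →* (B → ℝ) ≃ₗ[ℝ] (B → ℝ)) : Prop :=
  ∀ (w : W) (f v : B → ℝ), pair (π w f) (ρ w v) = pair f v

/-- The set `Φ⁺` of positive roots: roots (elements of the orbit of the simple roots)
all of whose coordinates in the basis `Δ` are nonnegative. -/
def PhiPos [Fintype B] [DecidableEq B] (ρ : W →* (B → ℝ) ≃ₗ[ℝ] (B → ℝ)) : Set (B → ℝ) :=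
  {α | (∃ (w : W) (i : B), α = ρ w (sroot i)) ∧ ∀ j, 0 ≤ α j}

/-- The hyperplane `H_α = {f ∈ V* : ⟨f, α⟩ = 0}`. -/
def hyp [Fintype B] (α : B → ℝ) : Set (B → ℝ) := {f | pair f α = 0}

/-- The set `𝔓 = {H_α : α ∈ Φ⁺}` of hyperplanes. -/
def Planes [Fintype B] [DecidableEq B] (ρ : W →* (B → ℝ) ≃ₗ[ℝ] (B → ℝ)) :
    Set (Set (B → ℝ)) :=
  {H | ∃ α ∈ PhiPos (W := W) ρ, H = hyp α}

/-- The (open) dominant chamber `C = {f ∈ V* : ⟨f, α_i⟩ > 0 for all i}`. -/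
def domCham (B : Type) [Fintype B] [DecidableEq B] : Set (B → ℝ) :=
  {f | ∀ i : B, 0 < pair f (sroot i)}

/-- The Tits cone `U = ⋃_{w ∈ W} w · (closure of C)`. -/
def titsCone [Fintype B] [DecidableEq B] (π : W →* (B → ℝ) ≃ₗ[ℝ] (B → ℝ)) :
    Set (B → ℝ) :=
  ⋃ w : W, (π w) '' closure (domCham B)

/-- `A ⩀ B := A ∩ B ∩ U°`, where `U°` is the interior of the Tits cone. -/
def dcap [Fintype B] [DecidableEq B] (π : W →* (B → ℝ) ≃ₗ[ℝ] (B → ℝ))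
    (A A' : Set (B → ℝ)) : Set (B → ℝ) :=
  A ∩ A' ∩ interior (titsCone π)

/-- A set `𝔔` of hyperplanes is intersecting if `H₁ ⩀ H₂ ≠ ∅` for all `H₁, H₂ ∈ 𝔔`. -/
def Intersecting [Fintype B] [DecidableEq B] (π : W →* (B → ℝ) ≃ₗ[ℝ] (B → ℝ))
    (Q : Set (Set (B → ℝ))) : Prop :=
  ∀ H₁ ∈ Q, ∀ H₂ ∈ Q, (dcap π H₁ H₂).Nonempty

/-- The chamber `wC ⊆ V*`. -/
def cham [Fintype B] [DecidableEq B] (π : W →* (B → ℝ) ≃ₗ[ℝ] (B → ℝ)) (w : W) :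
    Set (B → ℝ) :=
  (π w) '' domCham B

/-- The hyperplane with root `α` separates `f, g ∈ V*`: `⟨f, α⟩⟨g, α⟩ < 0`. -/
def SepPt [Fintype B] (α f g : B → ℝ) : Prop := pair f α * pair g α < 0

/-- The hyperplane with root `α` separates the subsets `A, A'` of `V*`: every point of
`A ∪ A'` lies off the hyperplane, and every point of `A` is separated from every point
of `A'`. -/
def SepSets [Fintype B] (α : B → ℝ) (A A' : Set (B → ℝ)) : Prop :=
  (∀ f ∈ A ∪ A', pair f α ≠ 0) ∧ ∀ f ∈ A, ∀ g ∈ A', SepPt α f g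

/-- The subset `A ⊆ V*` lies entirely on one side of the hyperplane with root `α`. -/
def OneSide [Fintype B] (α : B → ℝ) (A : Set (B → ℝ)) : Prop :=
  (∀ f ∈ A, pair f α ≠ 0) ∧ ∀ f ∈ A, ∀ g ∈ A, ¬ SepPt α f g

/-- The hyperplane `H ∈ 𝔓` separates the subsets `A, A'` of `V*` (expressed via a
positive root `α` with `H = H_α`; this does not depend on the choice of `α`). -/
def SepSetsH [Fintype B] [DecidableEq B] (ρ : W →* (B → ℝ) ≃ₗ[ℝ] (B → ℝ))
    (H : Set (B → ℝ)) (A A' : Set (B → ℝ)) : Prop :=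
  ∃ α ∈ PhiPos (W := W) ρ, H = hyp α ∧ SepSets α A A'


/-- The open half-space bounded by the hyperplane with root `α` on the side not containing
the chamber `wC`. -/
def halfNeg [Fintype B] [DecidableEq B] (π : W →* (B → ℝ) ≃ₗ[ℝ] (B → ℝ)) (w : W)
    (α : B → ℝ) : Set (B → ℝ) :=
  {f | ∀ f₀ ∈ cham π w, pair f α * pair f₀ α < 0}

/-- Auxiliary recursion producing the sets `𝔄_i` (first component) together with the
cumulative unions `𝔄₀ ∪ ⋯ ∪ 𝔄_i` (second component), starting from `𝔄₀ = A0`: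
`𝔄_{i+1} = {P ∈ Q ∖ (𝔄₀ ∪ ⋯ ∪ 𝔄_i) : P ⩀ σ(R) = ∅ for some R ∈ 𝔄_i}`. -/
def AseqAux [Fintype B] [DecidableEq B] (π : W →* (B → ℝ) ≃ₗ[ℝ] (B → ℝ))
    (Q : Set (Set (B → ℝ))) (σ : W) (A0 : Set (Set (B → ℝ))) :
    ℕ → Set (Set (B → ℝ)) × Set (Set (B → ℝ))
  | 0 => (A0, A0)
  | i + 1 =>
    let prev := AseqAux π Q σ A0 i
    ({P | P ∈ Q ∧ P ∉ prev.2 ∧ ∃ R ∈ prev.1, dcap π P ((π σ) '' R) = ∅},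
      prev.2 ∪ {P | P ∈ Q ∧ P ∉ prev.2 ∧ ∃ R ∈ prev.1, dcap π P ((π σ) '' R) = ∅})

/-- The set `𝔄_i`. -/
def Aseq [Fintype B] [DecidableEq B] (π : W →* (B → ℝ) ≃ₗ[ℝ] (B → ℝ))
    (Q : Set (Set (B → ℝ))) (σ : W) (A0 : Set (Set (B → ℝ))) (i : ℕ) :
    Set (Set (B → ℝ)) :=
  (AseqAux π Q σ A0 i).1

section Words

variable {M : CoxeterMatrix B}

/-- The element `x′_n = x s₁ ⋯ ŝ_{i₁} ⋯ ŝ_{i_{n−1}} ⋯ s_{i_n − 1}`: the product of `x` and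
the first `i_n - 1` letters of the word `ω`, with the letters at positions `i₁, …, i_{n−1}`
omitted. (Positions are recorded `0`-based: the index `ι n : Fin ω.length` corresponds to
the letter `s_{i_{n+1}}` of the paper.) -/
def omitProd (cs : CoxeterSystem M W) (x : W) (ω : List B) {p : ℕ}
    (ι : Fin p → Fin ω.length) (n : Fin p) : W :=
  x * cs.wordProd (((List.finRange ω.length).filter
      (fun j : Fin ω.length => decide ((j : ℕ) < (ι n : ℕ) ∧ ∀ m : Fin p, m < n → j ≠ ι m))).map ω.get)

/-- The condition `ℓ(x′_n s_{i_n}) < ℓ(x′_n)` for all `n = 1, …, p`. -/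
def DescCond (cs : CoxeterSystem M W) (x : W) (ω : List B) {p : ℕ}
    (ι : Fin p → Fin ω.length) : Prop :=
  ∀ n : Fin p, cs.length (omitProd cs x ω ι n * cs.simple (ω.get (ι n))) <
    cs.length (omitProd cs x ω ι n)

/-- The element `x_n := x s₁ ⋯ s_{i_n − 1}`. -/
def xseq (cs : CoxeterSystem M W) (x : W) (ω : List B) {p : ℕ}
    (ι : Fin p → Fin ω.length) (n : Fin p) : W :=
  x * cs.wordProd (ω.take (ι n))

/-- The reflection `σ_n := x_n s_{i_n} x_n⁻¹`. -/
def sigmaseq (cs : CoxeterSystem M W) (x : W) (ω : List B) {p : ℕ}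
    (ι : Fin p → Fin ω.length) (n : Fin p) : W :=
  xseq cs x ω ι n * cs.simple (ω.get (ι n)) * (xseq cs x ω ι n)⁻¹

/-- The element `e_n := σ_n σ_{n−1} ⋯ σ₁`, with `e₀ = e`. -/
def eseq (cs : CoxeterSystem M W) (x : W) (ω : List B) {p : ℕ}
    (ι : Fin p → Fin ω.length) : ℕ → W
  | 0 => 1
  | n + 1 => (if h : n < p then sigmaseq cs x ω ι ⟨n, h⟩ else 1) * eseq cs x ω ι n

/-- A root of the hyperplane `H_n` corresponding to the reflection `σ_n`, namely
`x_n · α_{s_{i_n}}`. -/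
def rootseq [Fintype B] [DecidableEq B] (cs : CoxeterSystem M W)
    (ρ : W →* (B → ℝ) ≃ₗ[ℝ] (B → ℝ)) (x : W) (ω : List B) {p : ℕ}
    (ι : Fin p → Fin ω.length) (n : Fin p) : B → ℝ :=
  ρ (xseq cs x ω ι n) (sroot (ω.get (ι n)))

/-- The hyperplane `H_n ∈ 𝔓` corresponding to the reflection `σ_n`. -/
def Hseq [Fintype B] [DecidableEq B] (cs : CoxeterSystem M W)
    (ρ : W →* (B → ℝ) ≃ₗ[ℝ] (B → ℝ)) (x : W) (ω : List B) {p : ℕ}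
    (ι : Fin p → Fin ω.length) (n : Fin p) : Set (B → ℝ) :=
  hyp (rootseq cs ρ x ω ι n)

end Words


set_option linter.unusedSectionVars false

def NF [Fintype B] [DecidableEq B] (ρ : W →* (B → ℝ) ≃ₗ[ℝ] (B → ℝ)) (f : B → ℝ) :
    Set (B → ℝ) :=
  {α | α ∈ PhiPos ρ ∧ pair f α < 0}

section Main

variable [Fintype B] [DecidableEq B] {M : CoxeterMatrix B}

lemma cB_symm (i j : B) : cB M i j = cB M j i := by
  unfold cB; rw [M.symmetric i j]

lemma cB_diag (i : B) : cB M i i = 1 := by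
  unfold cB; rw [M.diagonal i]; norm_num

@[simp] lemma pair_sroot (f : B → ℝ) (i : B) : pair f (sroot i) = f i := by
  unfold pair sroot
  rw [Finset.sum_eq_single i] <;> simp +contextual [Pi.single_apply]

lemma pair_smul_add_left (a b : ℝ) (f g v : B → ℝ) :
    pair (a • f + b • g) v = a * pair f v + b * pair g v := by
  unfold pair
  rw [Finset.mul_sum, Finset.mul_sum, ← Finset.sum_add_distrib]
  apply Finset.sum_congr rfl; intros; simp; ring

lemma pair_nonneg {f v : B → ℝ} (hf : ∀ i, 0 ≤ f i) (hv : ∀ i, 0 ≤ v i) : 0 ≤ pair f v :=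
  Finset.sum_nonneg fun i _ => mul_nonneg (hf i) (hv i)

lemma bform_sroot_left (i : B) (v : B → ℝ) : bform M (sroot i) v = ∑ j, v j * cB M i j := by
  unfold bform sroot
  rw [Finset.sum_eq_single i]
  · simp
  · intro b _ hb
    simp [Pi.single_apply, hb]
  · simp

lemma bform_sroot_sroot (i j : B) : bform M (sroot i) (sroot j) = cB M i j := by
  rw [bform_sroot_left]
  rw [Finset.sum_eq_single j] <;> simp +contextual [sroot, Pi.single_apply]

lemma bform_symm (u v : B → ℝ) : bform M u v = bform M v u := by
  unfold bform
  rw [Finset.sum_comm]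
  apply Finset.sum_congr rfl; intros i _
  apply Finset.sum_congr rfl; intros j _
  rw [cB_symm]; ring

lemma bform_add_right (u v w : B → ℝ) : bform M u (v + w) = bform M u v + bform M u w := by
  unfold bform
  rw [← Finset.sum_add_distrib]
  apply Finset.sum_congr rfl; intros i _
  rw [← Finset.sum_add_distrib]
  apply Finset.sum_congr rfl; intros j _
  simp; ring

lemma bform_smul_right (u v : B → ℝ) (c : ℝ) : bform M u (c • v) = c * bform M u v := by
  unfold bform
  rw [Finset.mul_sum]
  apply Finset.sum_congr rfl; intros i _
  rw [Finset.mul_sum]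
  apply Finset.sum_congr rfl; intros j _
  simp; ring

lemma bform_sub_right (u v w : B → ℝ) : bform M u (v - w) = bform M u v - bform M u w := by
  have := bform_add_right (M := M) u (v - w) w; simp at this; linarith



section Useq

/-- `useq m n` is `sin (n * pi/m) / sin (pi/m)` for `m` finite, and `n` for `m = 0` (infinity). -/
def useq (m : ℕ) (n : ℕ) : ℝ :=
  if m = 0 then n else Real.sin (n * (Real.pi / m)) / Real.sin (Real.pi / m)

/-- `gam m = 2 cos (pi/m)` for `m` finite, `2` for `m = 0`. -/
def gam (m : ℕ) : ℝ := if m = 0 then 2 else 2 * Real.cos (Real.pi / m)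

lemma two_le_of_ne {m : ℕ} (h0 : m ≠ 0) (h1 : m ≠ 1) : 2 ≤ m := by omega

lemma theta_pos {m : ℕ} (h0 : m ≠ 0) : 0 < Real.pi / m := by
  apply div_pos Real.pi_pos
  exact_mod_cast Nat.pos_of_ne_zero h0

lemma theta_lt_pi {m : ℕ} (h0 : m ≠ 0) (h1 : m ≠ 1) : Real.pi / m < Real.pi := by
  have h2 : (1 : ℝ) < (m : ℝ) := by exact_mod_cast two_le_of_ne h0 h1
  calc Real.pi / m < Real.pi / 1 := by
        apply div_lt_div_of_pos_left Real.pi_pos (by linarith) h2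
  _ = Real.pi := by ring

lemma sin_theta_pos {m : ℕ} (h0 : m ≠ 0) (h1 : m ≠ 1) : 0 < Real.sin (Real.pi / m) :=
  Real.sin_pos_of_pos_of_lt_pi (theta_pos h0) (theta_lt_pi h0 h1)

@[simp] lemma useq_zero (m : ℕ) : useq m 0 = 0 := by
  unfold useq; split <;> simp

lemma useq_one {m : ℕ} (h1 : m ≠ 1) : useq m 1 = 1 := by
  unfold useq; split
  · simp
  · next h0 => rw [Nat.cast_one, one_mul, div_self (ne_of_gt (sin_theta_pos h0 h1))]

lemma useq_two {m : ℕ} (h1 : m ≠ 1) : useq m 2 = gam m := by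
  unfold useq gam; split
  · simp
  · next h0 =>
    have hs := sin_theta_pos h0 h1
    rw [show ((2:ℕ):ℝ) * (Real.pi / m) = 2 * (Real.pi/m) by push_cast; ring,
      Real.sin_two_mul]
    field_simp

lemma useq_rec {m : ℕ} (h1 : m ≠ 1) (n : ℕ) :
    useq m (n + 2) = gam m * useq m (n + 1) - useq m n := by
  unfold useq gam; split
  · push_cast; ring
  · next h0 =>
    have hs := sin_theta_pos h0 h1
    set t := Real.pi / m with ht
    have e2 : ((n + 2 : ℕ) : ℝ) * t = ((n+1 : ℕ):ℝ) * t + t := by push_cast; ring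
    have e0 : ((n : ℕ) : ℝ) * t = ((n+1 : ℕ):ℝ) * t - t := by push_cast; ring
    rw [e2, e0, Real.sin_add, Real.sin_sub]
    field_simp
    ring

lemma useq_nonneg {m : ℕ} (h1 : m ≠ 1) {n : ℕ} (h : m = 0 ∨ n ≤ m) : 0 ≤ useq m n := by
  unfold useq; split
  · positivity
  · next h0 =>
    have hs := sin_theta_pos h0 h1
    apply div_nonneg _ (le_of_lt hs)
    apply Real.sin_nonneg_of_nonneg_of_le_pi
    · positivity
    · rcases h with h | h
      · exact absurd h h0
      · have hm : (0:ℝ) < (m:ℝ) := by exact_mod_cast Nat.pos_of_ne_zero h0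
        have hn : (n:ℝ) ≤ (m:ℝ) := by exact_mod_cast h
        calc (n:ℝ) * (Real.pi / m) ≤ (m:ℝ) * (Real.pi / m) := by
              apply mul_le_mul_of_nonneg_right hn (le_of_lt (theta_pos h0))
        _ = Real.pi := by field_simp

end Useq

variable {cs : CoxeterSystem M W} {ρ πr : W →* (B → ℝ) ≃ₗ[ℝ] (B → ℝ)}

lemma mulequiv_apply (f g : (B → ℝ) ≃ₗ[ℝ] (B → ℝ)) (v : B → ℝ) : (f * g) v = f (g v) := rfl

lemma rho_mul_apply (w₁ w₂ : W) (v : B → ℝ) : ρ (w₁ * w₂) v = ρ w₁ (ρ w₂ v) := by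
  rw [map_mul]; rfl

lemma rho_one_apply (v : B → ℝ) : ρ (1 : W) v = v := by rw [map_one]; rfl

variable (hρ : IsGeomRep M cs ρ)
include hρ

lemma rho_simple_sroot (i j : B) :
    ρ (cs.simple i) (sroot j) = sroot j - (2 * cB M i j) • sroot i := by
  rw [hρ i (sroot j), bform_sroot_sroot]

lemma rho_simple_sroot_self (i : B) : ρ (cs.simple i) (sroot i) = - sroot i := by
  rw [rho_simple_sroot hρ, cB_diag]; module

lemma rho_simple_invol (i : B) (v : B → ℝ) : ρ (cs.simple i) (ρ (cs.simple i) v) = v := by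
  rw [← rho_mul_apply, cs.simple_mul_simple_self, rho_one_apply]

lemma bform_rho_simple (i : B) (u v : B → ℝ) :
    bform M (ρ (cs.simple i) u) (ρ (cs.simple i) v) = bform M u v := by
  have hleft : ∀ (x y : B → ℝ) (c : ℝ),
      bform M (x - c • sroot i) y = bform M x y - c * bform M (sroot i) y := by
    intro x y c
    rw [bform_symm, bform_sub_right, bform_smul_right, bform_symm y x, bform_symm y (sroot i)]
  rw [hρ i u, hρ i v, hleft, bform_sub_right, bform_sub_right, bform_smul_right,
    bform_smul_right, bform_sroot_sroot, cB_diag, bform_symm u (sroot i)]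
  ring

lemma bform_rho (w : W) (u v : B → ℝ) : bform M (ρ w u) (ρ w v) = bform M u v := by
  obtain ⟨ω, rfl⟩ := cs.wordProd_surjective w
  induction ω generalizing u v with
  | nil => rw [CoxeterSystem.wordProd_nil, rho_one_apply, rho_one_apply]
  | cons a ω ih =>
    rw [CoxeterSystem.wordProd_cons, rho_mul_apply, rho_mul_apply,
      bform_rho_simple hρ, ih]

lemma pair_pi (hπ : IsContraRep ρ πr) (w : W) (f v : B → ℝ) :
    pair (πr w f) v = pair f (ρ w⁻¹ v) := by
  have := hπ w f (ρ w⁻¹ v)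
  rwa [← rho_mul_apply, mul_inv_cancel, rho_one_apply] at this




omit hρ in
lemma gam_eq {x y : B} (hxy : x ≠ y) : gam (M x y) = -(2 * cB M x y) := by
  have h1 : M x y ≠ 1 := M.off_diagonal x y hxy
  unfold gam cB; split <;> ring

open CoxeterSystem in
lemma alt_apply (x y : B) (hxy : x ≠ y) (k : ℕ) :
    ρ (cs.wordProd (alternatingWord x y (k+1))) (sroot x)
      = useq (M x y) (if Even (k+1) then k+2 else k+1) • sroot x
        + useq (M x y) (if Even (k+1) then k+1 else k+2) • sroot y
  ∧ ρ (cs.wordProd (alternatingWord x y (k+1))) (sroot y)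
      = (-useq (M x y) (if Even (k+1) then k+1 else k)) • sroot x
        + (-useq (M x y) (if Even (k+1) then k else k+1)) • sroot y := by
  have hm1 : M x y ≠ 1 := M.off_diagonal x y hxy
  have hyx : ρ (cs.simple y) (sroot x) = sroot x + gam (M x y) • sroot y := by
    rw [rho_simple_sroot hρ, cB_symm y x, gam_eq hxy]
    module
  have hxy2 : ρ (cs.simple x) (sroot y) = sroot y + gam (M x y) • sroot x := by
    rw [rho_simple_sroot hρ, gam_eq hxy]
    module
  have hxx : ρ (cs.simple x) (sroot x) = - sroot x := rho_simple_sroot_self hρ x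
  have hyy : ρ (cs.simple y) (sroot y) = - sroot y := rho_simple_sroot_self hρ y
  induction k using Nat.twoStepInduction with
  | zero =>
    have hword : alternatingWord x y 1 = [y] := rfl
    have hne : ¬ Even 1 := by decide
    rw [hword, cs.wordProd_singleton, if_neg hne, if_neg hne, if_neg hne, if_neg hne,
      useq_zero, useq_one hm1, useq_two hm1, hyx, hyy]
    constructor <;> module
  | one =>
    have hword : alternatingWord x y 2 = [x, y] := rfl
    have hev : Even 2 := by decide
    have h21 : (2:ℕ) + 1 = 3 := rfl
    rw [hword, show ([x,y] : List B) = [x] ++ [y] from rfl, cs.wordProd_append,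
      cs.wordProd_singleton, cs.wordProd_singleton, if_pos hev, if_pos hev,
      if_pos hev, if_pos hev]
    constructor
    · have hr : useq (M.M x y) (1+2) = gam (M.M x y) * useq (M.M x y) 2 - useq (M.M x y) 1 := by
        have h := useq_rec hm1 1
        norm_num at h ⊢
        exact h
      rw [rho_mul_apply, hyx, map_add, map_smul, hxx, hxy2,
        hr, useq_two hm1, useq_one hm1]
      module
    · rw [rho_mul_apply, hyy, map_neg, hxy2, useq_two hm1, useq_one hm1]
      module
  | more k ih _ =>
    obtain ⟨ihA, ihB⟩ := ih
    have hword : alternatingWord x y (k+3)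
        = ((alternatingWord x y (k+1)).concat x).concat y := by
      rw [show k + 3 = (k + 2) + 1 from rfl, alternatingWord_succ x y (k+2),
        alternatingWord_succ y x (k+1)]
    have hprod : cs.wordProd (alternatingWord x y (k+3))
        = cs.wordProd (alternatingWord x y (k+1)) * cs.simple x * cs.simple y := by
      rw [hword, cs.wordProd_concat, cs.wordProd_concat]
    set gm := gam (M x y) with hgm
    set T := ρ (cs.wordProd (alternatingWord x y (k+1))) with hT
    have hA3 : ρ (cs.wordProd (alternatingWord x y (k+3))) (sroot x)
        = (gm * gm - 1) • T (sroot x) + gm • T (sroot y) := by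
      rw [hprod, rho_mul_apply, rho_mul_apply, hyx, map_add, map_smul, hxx, hxy2, ← hT]
      rw [show (- sroot x + gm • (sroot y + gm • sroot x))
          = (gm * gm - 1) • sroot x + gm • sroot y from by module]
      rw [map_add, map_smul, map_smul]
    have hB3 : ρ (cs.wordProd (alternatingWord x y (k+3))) (sroot y)
        = (-gm) • T (sroot x) + (-1 : ℝ) • T (sroot y) := by
      rw [hprod, rho_mul_apply, rho_mul_apply, hyy, map_neg, hxy2, ← hT]
      rw [show (- (sroot y + gm • sroot x))
          = (-gm) • sroot x + (-1 : ℝ) • sroot y from by module]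
      rw [map_add, map_smul, map_smul]
    have r1 := useq_rec hm1 (k+2)
    have r2 := useq_rec hm1 (k+1)
    have r3 := useq_rec hm1 k
    rw [show k+2+2 = k+4 by omega, show k+2+1 = k+3 by omega] at r1
    rw [show k+1+2 = k+3 by omega, show k+1+1 = k+2 by omega] at r2
    rw [show k+2+1 = k+3 by omega, show k+2+2 = k+4 by omega]
    rcases Nat.even_or_odd (k+1) with he | ho
    · have he3 : Even (k+3) := by rcases he with ⟨t, ht⟩; exact ⟨t+1, by omega⟩
      simp only [if_pos he] at ihA ihB
      rw [hA3, hB3, ihA, ihB]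
      simp only [if_pos he3]
      constructor
      · match_scalars
        · simp only [r1, r2, r3]; ring
        · simp only [r1, r2, r3]; ring
      · match_scalars
        · simp only [r1, r2, r3]; ring
        · simp only [r1, r2, r3]; ring
    · have ho' : ¬ Even (k+1) := Nat.not_even_iff_odd.mpr ho
      have ho3 : ¬ Even (k+3) := by
        intro ⟨t, ht⟩; exact ho' ⟨t-1, by omega⟩
      simp only [if_neg ho'] at ihA ihB
      rw [hA3, hB3, ihA, ihB]
      simp only [if_neg ho3]
      constructor
      · match_scalars
        · simp only [r1, r2, r3]; ring
        · simp only [r1, r2, r3]; ring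
      · match_scalars
        · simp only [r1, r2, r3]; ring
        · simp only [r1, r2, r3]; ring


open CoxeterSystem in
omit hρ in
lemma norm_step (p q l : B) (hl : l = p ∨ l = q) (k : ℕ) :
    ∃ k' ≤ k + 1,
      cs.simple l * cs.wordProd (alternatingWord p q k) = cs.wordProd (alternatingWord p q k')
      ∨ cs.simple l * cs.wordProd (alternatingWord p q k) = cs.wordProd (alternatingWord q p k') := by
  have hsucc : cs.wordProd (alternatingWord p q (k+1))
      = cs.simple (if Even k then q else p) * cs.wordProd (alternatingWord p q k) := by
    rw [alternatingWord_succ' p q k, cs.wordProd_cons]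
  by_cases hc : l = (if Even k then q else p)
  · exact ⟨k + 1, le_refl _, Or.inl (by rw [hsucc, hc])⟩
  · match k with
    | 0 =>
      simp only [if_pos (Even.zero)] at hc
      have hlp : l = p := by tauto
      refine ⟨1, by omega, Or.inr ?_⟩
      have h1 : alternatingWord q p 1 = [p] := rfl
      rw [h1, cs.wordProd_singleton, hlp]
      simp [CoxeterSystem.alternatingWord]
    | k'' + 1 =>
      have hfirst : cs.wordProd (alternatingWord p q (k''+1))
          = cs.simple (if Even k'' then q else p) * cs.wordProd (alternatingWord p q k'') := by
        rw [alternatingWord_succ' p q k'', cs.wordProd_cons]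
      have hletter : l = (if Even k'' then q else p) := by
        rcases Nat.even_or_odd k'' with he | hodd
        · rw [if_pos he]
          rw [if_neg (by simp [Nat.even_add_one, he])] at hc
          tauto
        · rw [if_neg (Nat.not_even_iff_odd.mpr hodd)]
          rw [if_pos (by simp [Nat.even_add_one, Nat.not_even_iff_odd.mpr hodd])] at hc
          tauto
      refine ⟨k'', by omega, Or.inl ?_⟩
      rw [hfirst, ← hletter, ← mul_assoc, cs.simple_mul_simple_self, one_mul]

open CoxeterSystem in
omit hρ in
lemma word_norm (x y : B) (ω : List B) (hω : ∀ l ∈ ω, l = x ∨ l = y) :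
    ∃ k ≤ ω.length,
      cs.wordProd ω = cs.wordProd (alternatingWord x y k)
      ∨ cs.wordProd ω = cs.wordProd (alternatingWord y x k) := by
  induction ω with
  | nil => exact ⟨0, le_refl _, Or.inl (by simp [CoxeterSystem.alternatingWord])⟩
  | cons l ω' ih =>
    obtain ⟨k, hk, hcase⟩ := ih (fun a ha => hω a (List.mem_cons_of_mem l ha))
    have hl : l = x ∨ l = y := hω l List.mem_cons_self
    rcases hcase with h | h
    · obtain ⟨k', hk', hc⟩ := norm_step (cs := cs) x y l hl k
      rw [cs.wordProd_cons, h]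
      exact ⟨k', by simp only [List.length_cons]; omega, hc⟩
    · obtain ⟨k', hk', hc⟩ := norm_step (cs := cs) y x l (Or.symm hl) k
      rw [cs.wordProd_cons, h]
      refine ⟨k', by simp only [List.length_cons]; omega, hc.symm⟩

open CoxeterSystem in
lemma rank2 (x y : B) (hxy : x ≠ y) (ω : List B) (hω : ∀ l ∈ ω, l = x ∨ l = y)
    (hred : cs.length (cs.wordProd ω) = ω.length)
    (hasc : cs.length (cs.wordProd ω) < cs.length (cs.wordProd ω * cs.simple x)) :
    ∃ a b : ℝ, 0 ≤ a ∧ 0 ≤ b ∧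
      ρ (cs.wordProd ω) (sroot x) = a • sroot x + b • sroot y := by
  have hm1 : M x y ≠ 1 := M.off_diagonal x y hxy
  obtain ⟨k, hk, hcase⟩ := word_norm (cs := cs) x y ω hω
  -- the alternating word is reduced of length exactly `ω.length`
  have hlen : ∀ z z' : B, cs.wordProd ω = cs.wordProd (alternatingWord z z' k) → k = ω.length := by
    intro z z' h
    have h1 : cs.length (cs.wordProd (alternatingWord z z' k)) ≤ k := by
      have := cs.length_wordProd_le (alternatingWord z z' k)
      rwa [CoxeterSystem.length_alternatingWord] at this
    rw [← h, hred] at h1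
    omega
  rcases hcase with h | h
  · -- orientation (x, y): word ends with y (or is empty)
    have hkl : k = ω.length := hlen x y h
    match k, hk with
    | 0, _ =>
      refine ⟨1, 0, by norm_num, by norm_num, ?_⟩
      have h0 : alternatingWord x y 0 = [] := rfl
      rw [h, h0, cs.wordProd_nil, rho_one_apply]
      module
    | k' + 1, hk =>
      -- reducedness of the alternating word gives k'+1 ≤ M x y (if finite)
      have hred' : cs.IsReduced (alternatingWord x y (k'+1)) := by
        unfold CoxeterSystem.IsReduced
        rw [CoxeterSystem.length_alternatingWord, ← h, hred, hkl]
      have hle : M x y = 0 ∨ k' + 1 < M x y := by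
        by_cases h0 : M x y = 0
        · exact Or.inl h0
        · right
          have hle1 : k' + 1 ≤ M x y := by
            by_contra hgt
            exact cs.not_isReduced_alternatingWord x y h0 (by omega) hred'
          rcases Nat.lt_or_ge (k'+1) (M x y) with hlt | hge
          · exact hlt
          · -- k'+1 = M x y: use the braid relation to contradict hasc
            exfalso
            have heq : k' + 1 = M x y := by omega
            have hbraid : cs.wordProd (alternatingWord x y (M x y))
                = cs.wordProd (alternatingWord y x (M x y)) := by
              have hb := cs.wordProd_braidWord_eq x y
              unfold CoxeterSystem.braidWord at hb
              rw [M.symmetric y x] at hb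
              exact hb
            have hyx : cs.wordProd ω = cs.wordProd (alternatingWord y x (k'+1)) := by
              rw [h, heq, hbraid]
            have hconcat : alternatingWord y x (k'+1) = (alternatingWord x y k').concat x :=
              alternatingWord_succ y x k'
            have hcancel : cs.wordProd ω * cs.simple x = cs.wordProd (alternatingWord x y k') := by
              rw [hyx, hconcat, cs.wordProd_concat, cs.simple_mul_simple_cancel_right]
            have hlen2 : cs.length (cs.wordProd ω * cs.simple x) ≤ k' := by
              rw [hcancel]
              have := cs.length_wordProd_le (alternatingWord x y k')
              rwa [CoxeterSystem.length_alternatingWord] at this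
            rw [hred, ← hkl] at hasc
            omega
      obtain ⟨hA, -⟩ := alt_apply hρ x y hxy k'
      refine ⟨useq (M x y) (if Even (k'+1) then k'+2 else k'+1),
        useq (M x y) (if Even (k'+1) then k'+1 else k'+2), ?_, ?_, by rw [h, hA]⟩
      · apply useq_nonneg hm1
        rcases hle with h0 | hlt
        · exact Or.inl h0
        · right; split <;> omega
      · apply useq_nonneg hm1
        rcases hle with h0 | hlt
        · exact Or.inl h0
        · right; split <;> omega
  · -- orientation (y, x): if nonempty, the word ends with x, contradicting hasc
    have hkl : k = ω.length := hlen y x h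
    match k, hk with
    | 0, _ =>
      refine ⟨1, 0, by norm_num, by norm_num, ?_⟩
      have h0 : alternatingWord y x 0 = [] := rfl
      rw [h, h0, cs.wordProd_nil, rho_one_apply]
      module
    | k' + 1, hk =>
      exfalso
      have hconcat : alternatingWord y x (k'+1) = (alternatingWord x y k').concat x :=
        alternatingWord_succ y x k'
      have hcancel : cs.wordProd ω * cs.simple x = cs.wordProd (alternatingWord x y k') := by
        rw [h, hconcat, cs.wordProd_concat, cs.simple_mul_simple_cancel_right]
      have hlen2 : cs.length (cs.wordProd ω * cs.simple x) ≤ k' := by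
        rw [hcancel]
        have := cs.length_wordProd_le (alternatingWord x y k')
        rwa [CoxeterSystem.length_alternatingWord] at this
      rw [hred, ← hkl] at hasc
      omega


omit hρ in
lemma sroot_nonneg (i j : B) : 0 ≤ sroot i j := by
  unfold sroot; rw [Pi.single_apply]; split <;> norm_num

open CoxeterSystem in
theorem rho_pos : ∀ n : ℕ, ∀ w : W, cs.length w ≤ n → ∀ i : B, ¬ cs.IsRightDescent w i →
    ∀ j, 0 ≤ ρ w (sroot i) j := by
  intro n
  induction n with
  | zero =>
    intro w hw i _ j
    have hw1 : w = 1 := cs.length_eq_zero_iff.mp (Nat.le_zero.mp hw)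
    rw [hw1, rho_one_apply]
    exact sroot_nonneg i j
  | succ n ih =>
    intro w hw i hdesc j
    by_cases hw1 : w = 1
    · rw [hw1, rho_one_apply]; exact sroot_nonneg i j
    obtain ⟨j₀, hj₀⟩ := cs.exists_rightDescent_of_ne_one hw1
    have hij : i ≠ j₀ := by rintro rfl; exact hdesc hj₀
    classical
    have hex : ∃ nl : ℕ, ∃ u : W, ∃ ω : List B, cs.length u = nl ∧
        (∀ l ∈ ω, l = i ∨ l = j₀) ∧
        w = u * cs.wordProd ω ∧ cs.length w = cs.length u + ω.length := by
      exact ⟨cs.length w, w, [], rfl, by simp, by simp, by simp⟩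
    obtain ⟨u, ω, hlu, hlet, hwu, hadd⟩ := Nat.find_spec hex
    have hnd : ∀ l, (l = i ∨ l = j₀) → ¬ cs.IsRightDescent u l := by
      intro l hl hdl
      have hul : cs.length (u * cs.simple l) + 1 = cs.length u := by
        rcases cs.length_mul_simple u l with h | h
        · exfalso; unfold CoxeterSystem.IsRightDescent at hdl; omega
        · exact h
      apply Nat.find_min hex (m := cs.length (u * cs.simple l)) (by omega)
      refine ⟨u * cs.simple l, l :: ω, rfl, ?_, ?_, ?_⟩
      · intro a ha
        rcases List.mem_cons.mp ha with h | h
        · rw [h]; exact hl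
        · exact hlet a h
      · rw [cs.wordProd_cons, ← mul_assoc, cs.simple_mul_simple_cancel_right]; exact hwu
      · have h1 : cs.length w ≤ cs.length (u * cs.simple l) + (ω.length + 1) := by
          have h2 : w = (u * cs.simple l) * cs.wordProd (l :: ω) := by
            rw [cs.wordProd_cons, ← mul_assoc, cs.simple_mul_simple_cancel_right]; exact hwu
          calc cs.length w ≤ cs.length (u * cs.simple l) + cs.length (cs.wordProd (l :: ω)) := by
                rw [h2]; exact cs.length_mul_le _ _
          _ ≤ cs.length (u * cs.simple l) + (ω.length + 1) := by
                have := cs.length_wordProd_le (l :: ω)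
                simp only [List.length_cons] at this
                omega
        simp only [List.length_cons]
        omega
    have hωne : ω ≠ [] := by
      rintro rfl
      rw [cs.wordProd_nil, mul_one] at hwu
      exact hnd j₀ (Or.inr rfl) (hwu ▸ hj₀)
    have hω1 : 1 ≤ ω.length := by
      rcases ω with - | ⟨a, ω'⟩
      · exact absurd rfl hωne
      · simp
    set v := cs.wordProd ω with hv
    have hvle : cs.length v ≤ ω.length := cs.length_wordProd_le ω
    have hwsi : cs.length (w * cs.simple i) = cs.length w + 1 := by
      rcases cs.length_mul_simple w i with h | h
      · exact h
      · exfalso; exact hdesc (by unfold CoxeterSystem.IsRightDescent; omega)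
    have hvsi : ω.length + 1 ≤ cs.length (v * cs.simple i) := by
      have h1 : cs.length (w * cs.simple i) ≤ cs.length u + cs.length (v * cs.simple i) := by
        rw [hwu, mul_assoc]; exact cs.length_mul_le u (v * cs.simple i)
      omega
    have hvred : cs.length v = ω.length := by
      have h2 : cs.length (v * cs.simple i) ≤ cs.length v + 1 := by
        have := cs.length_mul_le v (cs.simple i)
        rwa [cs.length_simple] at this
      omega
    have hasc2 : cs.length v < cs.length (v * cs.simple i) := by omega
    obtain ⟨a, b, ha, hb, hvap⟩ := rank2 hρ i j₀ hij ω hlet hvred hasc2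
    have hw2 : ρ w (sroot i) = a • ρ u (sroot i) + b • ρ u (sroot j₀) := by
      rw [hwu, rho_mul_apply, hv, hvap, map_add, map_smul, map_smul]
    rw [hw2]
    have h1 := ih u (by omega) i (hnd i (Or.inl rfl)) j
    have h2 := ih u (by omega) j₀ (hnd j₀ (Or.inr rfl)) j
    simp only [Pi.add_apply, Pi.smul_apply, smul_eq_mul]
    exact add_nonneg (mul_nonneg ha h1) (mul_nonneg hb h2)


omit hρ in
lemma pair_neg_right (f v : B → ℝ) : pair f (-v) = - pair f v := by
  unfold pair; rw [← Finset.sum_neg_distrib]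
  apply Finset.sum_congr rfl; intros; simp

lemma root_sign (w : W) (i : B) :
    (∀ j, 0 ≤ ρ w (sroot i) j) ∨ (∀ j, ρ w (sroot i) j ≤ 0) := by
  by_cases hd : cs.IsRightDescent w i
  · right
    intro j
    have hnd : ¬ cs.IsRightDescent (w * cs.simple i) i := by
      unfold CoxeterSystem.IsRightDescent at *
      rw [cs.simple_mul_simple_cancel_right]
      omega
    have hpos := rho_pos hρ (cs.length (w * cs.simple i)) (w * cs.simple i) le_rfl i hnd j
    have hrw : ρ w (sroot i) = - ρ (w * cs.simple i) (sroot i) := by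
      conv_lhs => rw [show w = (w * cs.simple i) * cs.simple i from
        (cs.simple_mul_simple_cancel_right i).symm]
      rw [rho_mul_apply, rho_simple_sroot_self hρ, map_neg]
    rw [hrw]
    simp only [Pi.neg_apply]
    linarith
  · left
    exact rho_pos hρ (cs.length w) w le_rfl i hd

omit hρ in
lemma sroot_mem_phiPos : ∀ i : B, sroot i ∈ PhiPos (W := W) ρ := by
  intro i
  exact ⟨⟨1, i, (rho_one_apply (sroot i)).symm⟩, sroot_nonneg i⟩

lemma root_bform_one {α : B → ℝ} (hα : α ∈ PhiPos (W := W) ρ) : bform M α α = 1 := by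
  obtain ⟨⟨w, k, rfl⟩, -⟩ := hα
  rw [bform_rho hρ, bform_sroot_sroot, cB_diag]

lemma phiPos_support {α : B → ℝ} (hα : α ∈ PhiPos (W := W) ρ) (i : B)
    (hsupp : ∀ j, j ≠ i → α j = 0) : α = sroot i := by
  have hform := root_bform_one hρ hα
  have heq : α = α i • sroot i := by
    funext j
    by_cases hj : j = i
    · subst hj; simp [sroot]
    · rw [hsupp j hj]; simp [sroot, Pi.single_apply, hj]
  rw [heq, bform_smul_right, bform_symm, bform_smul_right, bform_sroot_sroot, cB_diag] at hform
  have hi : 0 ≤ α i := hα.2 i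
  have : α i = 1 := by nlinarith
  rw [heq, this, one_smul]

lemma refl_perm (i : B) {α : B → ℝ} (hα : α ∈ PhiPos (W := W) ρ) (hne : α ≠ sroot i) :
    ρ (cs.simple i) α ∈ PhiPos (W := W) ρ ∧ ρ (cs.simple i) α ≠ sroot i := by
  obtain ⟨⟨w, k, hwk⟩, hcoord⟩ := hα
  have horb : ρ (cs.simple i) α = ρ (cs.simple i * w) (sroot k) := by
    rw [rho_mul_apply, hwk]
  have hoff : ∀ j, j ≠ i → ρ (cs.simple i) α j = α j := by
    intro j hj
    rw [hρ i α]
    simp [sroot, Pi.single_apply, hj]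
  constructor
  · rcases root_sign hρ (cs.simple i * w) k with hp | hn
    · rw [← horb] at hp
      exact ⟨⟨cs.simple i * w, k, horb⟩, hp⟩
    · exfalso
      rw [← horb] at hn
      apply hne
      apply phiPos_support hρ ⟨⟨w, k, hwk⟩, hcoord⟩ i
      intro j hj
      have h1 := hn j
      rw [hoff j hj] at h1
      exact le_antisymm h1 (hcoord j)
  · intro hcontra
    have : α = ρ (cs.simple i) (sroot i) := by
      rw [← hcontra, rho_simple_invol hρ]
    rw [rho_simple_sroot_self hρ] at this
    have hci := hcoord i
    rw [this] at hci
    simp [sroot] at hci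
    linarith

lemma finite_T (ω : List B) :
    {α | α ∈ PhiPos (W := W) ρ ∧ ∃ j, ρ (cs.wordProd ω) α j < 0}.Finite := by
  induction ω using List.reverseRecOn with
  | nil =>
    convert Set.finite_empty
    ext α
    simp only [Set.mem_setOf_eq, Set.mem_empty_iff_false, iff_false, not_and]
    intro hα
    rw [cs.wordProd_nil, rho_one_apply]
    push_neg
    exact hα.2
  | append_singleton ω a ihω =>
    apply Set.Finite.subset (Set.Finite.union (Set.finite_singleton (sroot a))
      (ihω.image (fun v => ρ (cs.simple a) v)))
    rintro α ⟨hpos, j, hj⟩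
    by_cases hsa : α = sroot a
    · exact Or.inl (by simpa using hsa)
    · right
      refine ⟨ρ (cs.simple a) α, ⟨(refl_perm hρ a hpos hsa).1, j, ?_⟩, rho_simple_invol hρ a α⟩
      rw [show ω ++ [a] = ω.concat a from List.concat_eq_append.symm,
        cs.wordProd_concat, rho_mul_apply] at hj
      exact hj

omit hρ in
lemma closure_domCham : closure (domCham B) = {f : B → ℝ | ∀ i, 0 ≤ f i} := by
  apply subset_antisymm
  · apply closure_minimal
    · intro f hf i
      have := hf i
      rw [pair_sroot] at this
      linarith
    · have heq : {f : B → ℝ | ∀ i, 0 ≤ f i} = ⋂ i, {f | 0 ≤ f i} := by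
        ext f; simp
      rw [heq]
      exact isClosed_iInter (fun i => isClosed_le continuous_const (continuous_apply i))
  · intro f hf
    have htend : Filter.Tendsto (fun n : ℕ => f + (1/(n+1) : ℝ) • (fun _ => 1 : B → ℝ))
        Filter.atTop (nhds f) := by
      have h0 : Filter.Tendsto (fun n : ℕ => (1/(n+1) : ℝ)) Filter.atTop (nhds 0) :=
        tendsto_one_div_add_atTop_nhds_zero_nat
      have h1 := h0.smul_const (fun _ => 1 : B → ℝ)
      rw [zero_smul] at h1
      have h2 := h1.const_add f
      rwa [add_zero] at h2
    apply mem_closure_of_tendsto htend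
    filter_upwards with n
    intro i
    rw [pair_sroot]
    have : (0:ℝ) < 1/(n+1) := by positivity
    simp only [Pi.add_apply, Pi.smul_apply, smul_eq_mul, mul_one]
    have := hf i
    linarith

omit hρ in
lemma orthant_sub_titsCone {f : B → ℝ} (hf : ∀ i, 0 ≤ f i) : f ∈ titsCone πr := by
  apply Set.mem_iUnion.mpr
  refine ⟨1, f, ?_, by rw [map_one]; rfl⟩
  rw [closure_domCham]
  exact hf

omit hρ in
lemma titsCone_mapsto (w : W) {f : B → ℝ} (hf : f ∈ titsCone πr) : πr w f ∈ titsCone πr := by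
  obtain ⟨S, ⟨w', rfl⟩, g, hg, rfl⟩ := hf
  apply Set.mem_iUnion.mpr
  exact ⟨w * w', g, hg, rho_mul_apply (ρ := πr) w w' g⟩

lemma NF_finite_of_titsCone (hπ : IsContraRep ρ πr) {f : B → ℝ} (hf : f ∈ titsCone πr) :
    (NF ρ f).Finite := by
  obtain ⟨S, ⟨w, rfl⟩, g, hg, rfl⟩ := hf
  rw [closure_domCham] at hg
  obtain ⟨ω, hω⟩ := cs.wordProd_surjective w⁻¹
  apply Set.Finite.subset (finite_T hρ ω)
  rintro α ⟨hpos, hneg⟩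
  refine ⟨hpos, ?_⟩
  by_contra hno
  push_neg at hno
  have hval : pair (πr w g) α = pair g (ρ w⁻¹ α) := pair_pi hρ hπ w g α
  rw [← hω] at hval
  have : 0 ≤ pair g (ρ (cs.wordProd ω) α) := pair_nonneg hg hno
  rw [← hval] at this
  linarith

lemma titsCone_of_NF_finite (hπ : IsContraRep ρ πr) {f : B → ℝ} (hfin : (NF ρ f).Finite) :
    f ∈ titsCone πr := by
  generalize hn : (NF ρ f).ncard = n
  induction n using Nat.strong_induction_on generalizing f with
  | _ n IH =>
  by_cases hall : ∀ i, 0 ≤ f i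
  · exact orthant_sub_titsCone hall
  push_neg at hall
  obtain ⟨i, hi⟩ := hall
  have hmem : sroot i ∈ NF ρ f := ⟨sroot_mem_phiPos i, by rw [pair_sroot]; exact hi⟩
  set f' := πr (cs.simple i) f with hf'
  have hsub : NF ρ f' ⊆ (fun v => ρ (cs.simple i) v) '' (NF ρ f \ {sroot i}) := by
    rintro α ⟨hα, hneg⟩
    have hval : pair f' α = pair f (ρ (cs.simple i) α) := by
      rw [hf', pair_pi hρ hπ, cs.inv_simple]
    have hασ : α ≠ sroot i := by
      rintro rfl
      rw [hval, rho_simple_sroot_self hρ, pair_neg_right, pair_sroot] at hneg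
      linarith
    obtain ⟨hmem', hne'⟩ := refl_perm hρ i hα hασ
    refine ⟨ρ (cs.simple i) α, ⟨⟨hmem', by rwa [← hval]⟩, hne'⟩, rho_simple_invol hρ i α⟩
  have hfin' : (NF ρ f').Finite := Set.Finite.subset (((Set.Finite.diff hfin : (NF ρ f \ {sroot i}).Finite)).image _) hsub
  have hlt : (NF ρ f').ncard < n := by
    calc (NF ρ f').ncard
        ≤ ((fun v => ρ (cs.simple i) v) '' (NF ρ f \ {sroot i})).ncard :=
          Set.ncard_le_ncard hsub (((Set.Finite.diff hfin : (NF ρ f \ {sroot i}).Finite)).image _)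
      _ ≤ (NF ρ f \ {sroot i}).ncard := Set.ncard_image_le ((Set.Finite.diff hfin : (NF ρ f \ {sroot i}).Finite))
      _ < (NF ρ f).ncard := Set.ncard_diff_singleton_lt_of_mem hmem hfin
      _ = n := hn
  have hf'mem := IH (NF ρ f').ncard hlt hfin' rfl
  have hff' : πr (cs.simple i) f' = f := by
    rw [hf', ← rho_mul_apply (ρ := πr), cs.simple_mul_simple_self, rho_one_apply]
  rw [← hff']
  exact titsCone_mapsto (cs.simple i) hf'mem

theorem titsCone_convex (hπ : IsContraRep ρ πr) : Convex ℝ (titsCone πr) := by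
  intro x hx y hy a b ha hb hab
  have hfx := NF_finite_of_titsCone hρ hπ hx
  have hfy := NF_finite_of_titsCone hρ hπ hy
  apply titsCone_of_NF_finite hρ hπ
  apply Set.Finite.subset (hfx.union hfy)
  rintro α ⟨hpos, hneg⟩
  rw [pair_smul_add_left] at hneg
  by_contra hno
  simp only [Set.mem_union, NF, Set.mem_setOf_eq, not_or, not_and, not_lt] at hno
  have h1 := hno.1 hpos
  have h2 := hno.2 hpos
  nlinarith


omit hρ in
lemma seg_zero {p q : ℝ} (hpq : p * q < 0) :
    ∃ t : ℝ, 0 ≤ t ∧ t ≤ 1 ∧ t * p + (1 - t) * q = 0 := by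
  have hd : q - p ≠ 0 := by
    intro h
    have : q = p := by linarith
    rw [this] at hpq
    nlinarith
  have key : (q / (q - p)) * (q - p) = q := div_mul_cancel₀ q hd
  refine ⟨q / (q - p), ?_, ?_, by linear_combination -key⟩
  · by_contra ht
    push_neg at ht
    rcases mul_neg_iff.mp hpq with ⟨hp, hq⟩ | ⟨hp, hq⟩
    · nlinarith
    · nlinarith
  · by_contra ht
    push_neg at ht
    rcases mul_neg_iff.mp hpq with ⟨hp, hq⟩ | ⟨hp, hq⟩
    · nlinarith
    · nlinarith

omit hρ in
lemma convex_pos {t A C : ℝ} (ht0 : 0 ≤ t) (ht1 : t ≤ 1) (hA : 0 < A) (hC : 0 < C) :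
    0 < t * A + (1 - t) * C := by
  rcases eq_or_lt_of_le ht0 with h | h
  · rw [← h]; linarith
  · have h1 := mul_pos h hA
    have h2 := mul_nonneg (sub_nonneg.mpr ht1) (le_of_lt hC)
    nlinarith

omit hρ in
lemma seg_sign {t a₁ a₂ : ℝ} (ht0 : 0 ≤ t) (ht1 : t ≤ 1) (hsame : 0 < a₁ * a₂) :
    0 < (t * a₁ + (1 - t) * a₂) * a₁ := by
  rcases lt_trichotomy a₁ 0 with hneg | hzero | hpos
  · have ha2 : a₂ < 0 := by nlinarith
    have := convex_pos ht0 ht1 (neg_pos.mpr hneg) (neg_pos.mpr ha2)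
    nlinarith
  · rw [hzero] at hsame; simp at hsame
  · have ha2 : 0 < a₂ := by nlinarith
    exact mul_pos (convex_pos ht0 ht1 hpos ha2) hpos

end Main

/-- if `P′` separates `f₁, f₂` and separates `g₁, g₂` while `P` separates
neither pair, and `P` separates each `f_i` from each `g_j` (all points in `U°`, off
`P ∪ P′`), then `P ⩀ P′ ≠ ∅`. Here `P = H_α` and `P′ = H_β` with `α, β ∈ Φ⁺`. -/
theorem statement9 [Fintype B] [DecidableEq B] {M : CoxeterMatrix B}
    (cs : CoxeterSystem M W) (ρ π : W →* (B → ℝ) ≃ₗ[ℝ] (B → ℝ))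
    (hρ : IsGeomRep M cs ρ) (hπ : IsContraRep ρ π)
    (α β : B → ℝ) (hα : α ∈ PhiPos ρ) (hβ : β ∈ PhiPos ρ)
    (f₁ f₂ g₁ g₂ : B → ℝ)
    (hf₁ : f₁ ∈ interior (titsCone π)) (hf₂ : f₂ ∈ interior (titsCone π))
    (hg₁ : g₁ ∈ interior (titsCone π)) (hg₂ : g₂ ∈ interior (titsCone π))
    (hf₁' : f₁ ∉ hyp α ∪ hyp β) (hf₂' : f₂ ∉ hyp α ∪ hyp β)
    (hg₁' : g₁ ∉ hyp α ∪ hyp β) (hg₂' : g₂ ∉ hyp α ∪ hyp β)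
    (h1 : SepPt β f₁ f₂) (h1' : ¬ SepPt α f₁ f₂)
    (h2 : SepPt β g₁ g₂) (h2' : ¬ SepPt α g₁ g₂)
    (h3 : SepPt α f₁ g₁ ∧ SepPt α f₁ g₂ ∧ SepPt α f₂ g₁ ∧ SepPt α f₂ g₂) :
    (dcap π (hyp α) (hyp β)).Nonempty := by

  have hconv : Convex ℝ (interior (titsCone π)) := (titsCone_convex hρ hπ).interior
  simp only [Set.mem_union, hyp, Set.mem_setOf_eq, not_or] at hf₁' hf₂' hg₁' hg₂'
  obtain ⟨ha1, hb1⟩ := hf₁'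
  obtain ⟨ha2, hb2⟩ := hf₂'
  obtain ⟨hc1, hd1⟩ := hg₁'
  obtain ⟨hc2, hd2⟩ := hg₂'
  have hasign : 0 < pair f₁ α * pair f₂ α := by
    rcases lt_or_gt_of_ne (mul_ne_zero ha1 ha2) with h | h
    · exact absurd h h1'
    · exact h
  have hbsign : 0 < pair g₁ α * pair g₂ α := by
    rcases lt_or_gt_of_ne (mul_ne_zero hc1 hc2) with h | h
    · exact absurd h h2'
    · exact h
  -- point x on the segment [f₁, f₂] with pair x β = 0
  obtain ⟨t, ht0, ht1, htz⟩ := seg_zero (p := pair f₁ β) (q := pair f₂ β) h1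
  set x := t • f₁ + (1 - t) • f₂ with hxdef
  have hxU : x ∈ interior (titsCone π) := hconv hf₁ hf₂ ht0 (by linarith) (by ring)
  have hxβ : pair x β = 0 := by rw [hxdef, pair_smul_add_left]; exact htz
  have hxα : 0 < pair x α * pair f₁ α := by
    rw [hxdef, pair_smul_add_left]
    exact seg_sign ht0 ht1 hasign
  -- point y on the segment [g₁, g₂] with pair y β = 0
  obtain ⟨u, hu0, hu1, huz⟩ := seg_zero (p := pair g₁ β) (q := pair g₂ β) h2
  set y := u • g₁ + (1 - u) • g₂ with hydef
  have hyU : y ∈ interior (titsCone π) := hconv hg₁ hg₂ hu0 (by linarith) (by ring)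
  have hyβ : pair y β = 0 := by rw [hydef, pair_smul_add_left]; exact huz
  have hyα : 0 < pair y α * pair g₁ α := by
    rw [hydef, pair_smul_add_left]
    exact seg_sign hu0 hu1 hbsign
  -- x and y are separated by the hyperplane of α
  have hxy : pair x α * pair y α < 0 := by
    have h31 : pair f₁ α * pair g₁ α < 0 := h3.1
    by_contra hcon
    push_neg at hcon
    nlinarith [mul_pos hxα hyα]
  -- point z on the segment [x, y] with pair z α = 0
  obtain ⟨v, hv0, hv1, hvz⟩ := seg_zero hxy
  refine ⟨v • x + (1 - v) • y, ⟨⟨?_, ?_⟩, ?_⟩⟩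
  · show pair (v • x + (1 - v) • y) α = 0
    rw [pair_smul_add_left]; exact hvz
  · show pair (v • x + (1 - v) • y) β = 0
    rw [pair_smul_add_left, hxβ, hyβ]; ring
  · exact hconv hxU hyU hv0 (by linarith) (by ring)

end PaperBound
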